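/- Let A be the set consisting of the countable successor ordinals together with the point ω₁, viewed as a subspace of ω₁ + 1 with the order topology. Then every compact subset of A is finite; consequently A is Lindelöf but not σ-compact. -/

import Mathlib

open Set Filter Topology Cardinal

local notation "ω₁" => Cardinal.ord (Cardinal.aleph 1)

/-- The set of countable successor ordinals together with `ω₁`, as a subspace of
`ω₁ + 1`. -/
def succSet : Set Ordinal.{0} :=
  {o | o < (Cardinal.aleph 1).ord ∧ ∃ b, o = b + 1} ∪ {(Cardinal.aleph 1).ord}

lemma mem_succSet_le {o : Ordinal.{0}} (ho : o ∈ succSet) : o ≤ ω₁ := by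
  rcases ho with ⟨h, _⟩ | h
  · exact h.le
  · exact h.le

lemma mem_succSet_of_ne {o : Ordinal.{0}} (ho : o ∈ succSet) (hne : o ≠ ω₁) :
    o < ω₁ ∧ ∃ b, o = b + 1 := by
  rcases ho with h | h
  · exact h
  · exact absurd h hne

lemma isOpen_singleton_of_mem {o : Ordinal.{0}} (ho : o ∈ succSet) (hne : o ≠ ω₁) :
    IsOpen ({o} : Set Ordinal.{0}) := by
  obtain ⟨-, b, rfl⟩ := mem_succSet_of_ne ho hne
  rw [Ordinal.isOpen_singleton_iff, Ordinal.add_one_eq_succ]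
  exact Order.not_isSuccLimit_succ b

lemma compact_subset_finite (C : Set Ordinal.{0}) (hC : C ⊆ succSet) (hK : IsCompact C) :
    C.Finite := by
  by_contra hinf
  have hinf' : C.Infinite := hinf
  have h1 : (C \ {ω₁}).Infinite := hinf'.diff (Set.finite_singleton _)
  let f := h1.natEmbedding
  have hflt : ∀ n, (f n : Ordinal) < ω₁ := fun n =>
    (mem_succSet_of_ne (hC (f n).2.1) (f n).2.2).1
  set β := ⨆ n, ((f n : Ordinal)) with hβdef
  have hβ : β < ω₁ := by
    apply Ordinal.iSup_lt_ord _ hflt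
    rw [Cardinal.isRegular_aleph_one.cof_eq, Cardinal.mk_nat]
    exact Cardinal.aleph0_lt_aleph_one
  have hle : ∀ n, (f n : Ordinal) ≤ β := fun n => Ordinal.le_iSup _ n
  -- cover
  set ι := Option {c : Ordinal.{0} // c ∈ C ∧ c ≤ β} with hι
  set U : ι → Set Ordinal.{0} := fun i => Option.rec (Set.Ioi β) (fun c => {c.1}) i with hU
  have hUo : ∀ i, IsOpen (U i) := by
    rintro (_ | ⟨c, hc, hcβ⟩)
    · exact isOpen_Ioi
    · exact isOpen_singleton_of_mem (hC hc) (fun h => ((h ▸ hcβ : ω₁ ≤ β).trans_lt hβ).false)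
  have hcov : C ⊆ ⋃ i, U i := by
    intro x hx
    rcases le_or_gt x β with h | h
    · exact Set.mem_iUnion.2 ⟨some ⟨x, hx, h⟩, rfl⟩
    · exact Set.mem_iUnion.2 ⟨none, h⟩
  obtain ⟨t, ht⟩ := hK.elim_finite_subcover U hUo hcov
  have hrange : (Set.range fun n => ((f n : Ordinal))).Finite := by
    have : (Set.range fun n => ((f n : Ordinal))) ⊆ ⋃ i ∈ t, U i ∩ Set.Iic β := by
      rintro x ⟨n, rfl⟩
      have := ht (f n).2.1
      rw [Set.mem_iUnion₂] at this ⊢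
      obtain ⟨i, hi, hxi⟩ := this
      exact ⟨i, hi, hxi, hle n⟩
    apply Set.Finite.subset _ this
    apply t.finite_toSet.biUnion
    rintro (_ | c) -
    · have : U none ∩ Set.Iic β = ∅ := by
        ext x
        simp only [hU, Set.mem_inter_iff, Set.mem_Ioi, Set.mem_Iic, Set.mem_empty_iff_false,
          iff_false, not_and, not_le]
        exact fun h => h
      rw [this]; exact Set.finite_empty
    · exact (Set.finite_singleton _).inter_of_left _
  exact (Set.infinite_range_of_injective
    (fun a b h => f.injective (Subtype.ext h))) hrange

lemma omega1_isLimit : Order.IsSuccLimit ω₁ := Cardinal.isSuccLimit_ord (Cardinal.aleph0_le_aleph 1)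

lemma countable_Iic_of_lt {a : Ordinal.{0}} (ha : a < ω₁) : (Set.Iic a).Countable := by
  have h1 : a + 1 < ω₁ := by
    rw [Ordinal.add_one_eq_succ]
    exact omega1_isLimit.succ_lt ha
  have h2 : Set.Iic a ⊆ Set.Iio (a + 1) := fun x hx => by
    rw [Set.mem_Iio, Ordinal.add_one_eq_succ, Order.lt_succ_iff]; exact hx
  rw [Cardinal.countable_iff_lt_aleph_one]
  calc #(Set.Iic a) ≤ #(Set.Iio (a + 1)) := Cardinal.mk_le_mk_of_subset h2
    _ = Cardinal.lift.{1} (a + 1).card := Ordinal.mk_Iio_ordinal _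
    _ < ℵ₁ := Cardinal.lift_lt_aleph_one.2 (Cardinal.lt_ord.1 h1)

lemma compl_nhds_countable (U : Set ↥succSet) (hU : U ∈ 𝓝 (⟨ω₁, Or.inr rfl⟩ : ↥succSet)) :
    (Uᶜ).Countable := by
  rw [nhds_subtype, Filter.mem_comap] at hU
  obtain ⟨V, hV, hVU⟩ := hU
  have h0 : ∃ l, l < ω₁ := ⟨0, omega1_isLimit.pos⟩
  obtain ⟨a, ha, haV⟩ := exists_Ioc_subset_of_mem_nhds hV h0
  have hsub : Uᶜ ⊆ Subtype.val ⁻¹' (Set.Iic a) := by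
    intro x hx
    by_contra h
    simp only [Set.mem_preimage, Set.mem_Iic, not_le] at h
    exact hx (hVU (haV ⟨h, mem_succSet_le x.2⟩))
  exact ((countable_Iic_of_lt ha).preimage Subtype.val_injective).mono hsub

lemma lindelof : LindelofSpace ↥succSet := by
  constructor
  intro f hne hci hle
  by_cases hcl : ClusterPt (⟨ω₁, Or.inr rfl⟩ : ↥succSet) f
  · exact ⟨_, Set.mem_univ _, hcl⟩
  · rw [ClusterPt, Filter.not_neBot, Filter.inf_eq_bot_iff] at hcl
    obtain ⟨U, hU, s, hs, hUs⟩ := hcl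
    have hscv : s ⊆ Uᶜ := fun x hx hxU =>
      Set.eq_empty_iff_forall_notMem.1 hUs x ⟨hxU, hx⟩
    have hsc : s.Countable := (compl_nhds_countable U hU).mono hscv
    by_contra hno
    push_neg at hno
    have hx : ∀ x : ↥succSet, ∃ t ∈ f, x ∉ t := by
      intro x
      have := hno x (Set.mem_univ x)
      rw [ClusterPt, Filter.not_neBot, Filter.inf_eq_bot_iff] at this
      obtain ⟨U', hU', t, ht, hUt⟩ := this
      exact ⟨t, ht, fun hxt => Set.eq_empty_iff_forall_notMem.1 hUt x
        ⟨mem_of_mem_nhds hU', hxt⟩⟩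
    choose t htf htx using hx
    have hT : (⋂ x ∈ s, t x) ∈ f := (countable_bInter_mem hsc).2 fun x _ => htf x
    obtain ⟨y, hys, hyT⟩ := Filter.nonempty_of_mem (Filter.inter_mem hs hT)
    exact htx y (Set.mem_iInter₂.1 hyT y hys)

lemma uncountable : ¬ (Set.univ : Set ↥succSet).Countable := by
  intro h
  rw [Set.countable_univ_iff] at h
  have hmk : #(↥succSet) < ℵ₁ :=
    (Cardinal.mk_le_aleph0_iff.2 h).trans_lt Cardinal.aleph0_lt_aleph_one
  set g : ↥(Set.Iio ω₁) → ↥succSet := fun b =>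
    ⟨(b : Ordinal) + 1, Or.inl ⟨by rw [Ordinal.add_one_eq_succ]; exact omega1_isLimit.succ_lt b.2,
      b, rfl⟩⟩ with hg
  have hginj : Function.Injective g := by
    intro b c hbc
    apply Subtype.ext
    have := congrArg Subtype.val hbc
    simp only [hg, Ordinal.add_one_eq_succ] at this
    exact Order.succ_injective this
  have hle := Cardinal.mk_le_of_injective hginj
  rw [Ordinal.mk_Iio_ordinal, Cardinal.card_ord, Cardinal.lift_aleph, Ordinal.lift_one] at hle
  exact (hle.trans_lt hmk).false

/-- Every compact subset of `A = A₀ ∪ {ω₁}` is finite; consequently `A` is Lindelöf but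
not σ-compact. -/
theorem succSet_compacts_finite_lindelof_not_sigmaCompact :
    (∀ K : Set ↥succSet, IsCompact K → K.Finite) ∧
      LindelofSpace ↥succSet ∧ ¬ SigmaCompactSpace ↥succSet := by
  have hfin : ∀ K : Set ↥succSet, IsCompact K → K.Finite := by
    intro K hK
    have h1 : IsCompact (Subtype.val '' K) := hK.image continuous_subtype_val
    have h2 := compact_subset_finite _ (by rintro x ⟨y, -, rfl⟩; exact y.2) h1
    exact h2.of_finite_image Subtype.val_injective.injOn
  refine ⟨hfin, lindelof, fun h => ?_⟩
  have hcnt : (Set.univ : Set ↥succSet).Countable := by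
    rw [← iUnion_compactCovering (↥succSet)]
    exact Set.countable_iUnion fun n =>
      (hfin _ (isCompact_compactCovering _ n)).countable
  exact uncountable hcnt
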